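/- Let I be an interval with inf I = 0 and f : I → ℝ continuous strictly monotone. If there exists ε ∈ I such that A_f restricted to (0,ε) is a Hardy mean, then for every s ∈ I, A_f restricted to (0,s) is also a Hardy mean, with Hardy constant at most max(H(A_f|_{(0,ε)}), (1 + s/ε)·c_f(s)) where c_f is the function from the localized Hardy bound. -/

import Mathlib

noncomputable def qam (f : ℝ → ℝ) (I : Set ℝ) (n : ℕ) (a : Fin n → ℝ) : ℝ :=
  Function.invFunOn f I ((∑ i, f (a i)) / n)

lemma avg_mem_image (I : Set ℝ) (hconn : I.OrdConnected)
    (f : ℝ → ℝ) (hf : ContinuousOn f I) {n : ℕ} (a : Fin (n+1) → ℝ)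
    (ha : ∀ i, a i ∈ I) : (∑ i, f (a i)) / (n+1 : ℕ) ∈ f '' I := by
  have himg : (f '' I).OrdConnected :=
    ((hconn.isPreconnected).image f hf).ordConnected
  obtain ⟨i0, -, hi0⟩ := Finset.exists_min_image Finset.univ (fun i => f (a i))
    ⟨0, Finset.mem_univ 0⟩
  obtain ⟨i1, -, hi1⟩ := Finset.exists_max_image Finset.univ (fun i => f (a i))
    ⟨0, Finset.mem_univ 0⟩
  have hpos : (0:ℝ) < (n+1 : ℕ) := by positivity
  have hlow : f (a i0) ≤ (∑ i, f (a i)) / (n+1 : ℕ) := by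
    rw [le_div_iff₀ hpos]
    calc f (a i0) * (n+1 : ℕ) = (Finset.univ : Finset (Fin (n+1))).card • f (a i0) := by
          simp [Finset.card_univ, nsmul_eq_mul, mul_comm]
      _ ≤ ∑ i, f (a i) := Finset.card_nsmul_le_sum _ _ _ (fun i _ => hi0 i (Finset.mem_univ i))
  have hhigh : (∑ i, f (a i)) / (n+1 : ℕ) ≤ f (a i1) := by
    rw [div_le_iff₀ hpos]
    calc ∑ i, f (a i) ≤ (Finset.univ : Finset (Fin (n+1))).card • f (a i1) :=
          Finset.sum_le_card_nsmul _ _ _ (fun i _ => hi1 i (Finset.mem_univ i))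
      _ = f (a i1) * (n+1 : ℕ) := by simp [Finset.card_univ, nsmul_eq_mul, mul_comm]
  exact himg.out ⟨a i0, ha i0, rfl⟩ ⟨a i1, ha i1, rfl⟩ ⟨hlow, hhigh⟩

lemma qam_mem (I : Set ℝ) (hconn : I.OrdConnected)
    (f : ℝ → ℝ) (hf : ContinuousOn f I) {n : ℕ} (a : Fin (n+1) → ℝ)
    (ha : ∀ i, a i ∈ I) : qam f I (n+1) a ∈ I := by
  obtain ⟨x, hx, hfx⟩ := avg_mem_image I hconn f hf a ha
  exact Function.invFunOn_mem ⟨x, hx, hfx⟩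

lemma invFunOn_le_invFunOn (I : Set ℝ) (f : ℝ → ℝ)
    (hmono : StrictMonoOn f I ∨ StrictAntiOn f I) {y1 y2 : ℝ}
    (h1 : y1 ∈ f '' I) (h2 : y2 ∈ f '' I)
    (h : (StrictMonoOn f I → y1 ≤ y2) ∧ (StrictAntiOn f I → y2 ≤ y1)) :
    Function.invFunOn f I y1 ≤ Function.invFunOn f I y2 := by
  obtain ⟨x1, hx1, hfx1⟩ := h1
  obtain ⟨x2, hx2, hfx2⟩ := h2
  have m1 : Function.invFunOn f I y1 ∈ I := Function.invFunOn_mem ⟨x1, hx1, hfx1⟩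
  have m2 : Function.invFunOn f I y2 ∈ I := Function.invFunOn_mem ⟨x2, hx2, hfx2⟩
  have e1 : f (Function.invFunOn f I y1) = y1 := Function.invFunOn_eq ⟨x1, hx1, hfx1⟩
  have e2 : f (Function.invFunOn f I y2) = y2 := Function.invFunOn_eq ⟨x2, hx2, hfx2⟩
  by_contra hlt
  push_neg at hlt
  rcases hmono with hm | hm
  · have := hm m2 m1 hlt
    rw [e1, e2] at this
    exact absurd (h.1 hm) (not_le.mpr this)
  · have := hm m2 m1 hlt
    rw [e1, e2] at this
    exact absurd (h.2 hm) (not_le.mpr this)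

/-- Prepending a term `s` that dominates all the `a i` increases the qam. -/
lemma qam_le_qam_cons (I : Set ℝ) (hconn : I.OrdConnected)
    (f : ℝ → ℝ) (hf : ContinuousOn f I)
    (hmono : StrictMonoOn f I ∨ StrictAntiOn f I)
    {s : ℝ} (hs : s ∈ I) {n : ℕ} (a : Fin (n+1) → ℝ)
    (ha : ∀ i, a i ∈ I) (has : ∀ i, a i ≤ s) :
    qam f I (n+1) a ≤ qam f I (n+2) (Fin.cons s a) := by
  have hb : ∀ i : Fin (n+2), (Fin.cons s a : Fin (n+2) → ℝ) i ∈ I := by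
    intro i
    refine Fin.cases ?_ ?_ i
    · simpa using hs
    · intro j; simpa using ha j
  have h1 := avg_mem_image I hconn f hf a ha
  have h2 := avg_mem_image I hconn f hf (Fin.cons s a) hb
  have hsum : ∑ i : Fin (n+2), f ((Fin.cons s a : Fin (n+2) → ℝ) i)
      = f s + ∑ i : Fin (n+1), f (a i) := by
    rw [Fin.sum_univ_succ]; simp
  have key1 : StrictMonoOn f I →
      (∑ i : Fin (n+1), f (a i)) / ((n:ℕ)+1 : ℕ) ≤
        (f s + ∑ i : Fin (n+1), f (a i)) / ((n:ℕ)+2 : ℕ) := by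
    intro hm
    have hle : ∀ i, f (a i) ≤ f s := fun i => hm.monotoneOn (ha i) hs (has i)
    have hS : ∑ i, f (a i) ≤ ((n:ℝ)+1) * f s := by
      calc ∑ i, f (a i) ≤ (Finset.univ : Finset (Fin (n+1))).card • f s :=
            Finset.sum_le_card_nsmul _ _ _ (fun i _ => hle i)
        _ = ((n:ℝ)+1) * f s := by simp [Finset.card_univ, nsmul_eq_mul]
    rw [div_le_div_iff₀ (by positivity) (by positivity)]
    push_cast
    nlinarith [hS]
  have key2 : StrictAntiOn f I →
      (f s + ∑ i : Fin (n+1), f (a i)) / ((n:ℕ)+2 : ℕ) ≤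
        (∑ i : Fin (n+1), f (a i)) / ((n:ℕ)+1 : ℕ) := by
    intro hm
    have hle : ∀ i, f s ≤ f (a i) := fun i => hm.antitoneOn (ha i) hs (has i)
    have hS : ((n:ℝ)+1) * f s ≤ ∑ i, f (a i) := by
      calc ((n:ℝ)+1) * f s = (Finset.univ : Finset (Fin (n+1))).card • f s := by
            simp [Finset.card_univ, nsmul_eq_mul]
        _ ≤ ∑ i, f (a i) := Finset.card_nsmul_le_sum _ _ _ (fun i _ => hle i)
    rw [div_le_div_iff₀ (by positivity) (by positivity)]
    push_cast
    nlinarith [hS]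
  unfold qam
  rw [hsum] at h2 ⊢
  refine invFunOn_le_invFunOn I f hmono h1 ?_ ⟨fun hm => ?_, fun hm => ?_⟩
  · convert h2 using 3 <;> push_cast <;> ring
  · have := key1 hm; convert this using 2 <;> push_cast <;> ring
  · have := key2 hm; convert this using 2 <;> push_cast <;> ring

theorem stmt_14 (I : Set ℝ) (hne : I.Nonempty) (hconn : I.OrdConnected)
    (hIpos : I ⊆ Set.Ioi 0) (hInf : sInf I = 0)
    (f : ℝ → ℝ) (hf : ContinuousOn f I)
    (hmono : StrictMonoOn f I ∨ StrictAntiOn f I)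
    (ε : ℝ) (hε : ε ∈ I)
    (Hε : ℝ)
    (hH : ∀ a : ℕ → ℝ, (∀ n, a n ∈ Set.Ioo (0:ℝ) ε) → Summable a →
      Summable (fun n => qam f I (n + 1) (fun k : Fin (n + 1) => a (k : ℕ))) ∧
      ∑' n, qam f I (n + 1) (fun k : Fin (n + 1) => a (k : ℕ)) ≤ Hε * ∑' n, a n)
    (c : ℝ → ℝ) (hcpos : ∀ x ∈ I, 0 < c x)
    (hc : ∀ a : ℕ → ℝ, (∀ n, a n ∈ I) → Summable a →
      Summable (fun n => qam f I (n + 1) (fun k : Fin (n + 1) => a (k : ℕ))) ∧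
      ∑' n, qam f I (n + 1) (fun k : Fin (n + 1) => a (k : ℕ)) ≤
        c (⨆ n, a n) * ∑' n, a n) :
    ∀ s ∈ I, ∀ a : ℕ → ℝ, (∀ n, a n ∈ Set.Ioo (0:ℝ) s) → Summable a →
      Summable (fun n => qam f I (n + 1) (fun k : Fin (n + 1) => a (k : ℕ))) ∧
      ∑' n, qam f I (n + 1) (fun k : Fin (n + 1) => a (k : ℕ)) ≤
        max Hε ((1 + s / ε) * c s) * ∑' n, a n := by
  intro s hs a ha hsum
  have hTnonneg : (0:ℝ) ≤ ∑' n, a n := tsum_nonneg (fun n => (ha n).1.le)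
  have hsubI : ∀ x : ℝ, 0 < x → x ≤ s → x ∈ I := by
    intro x hx0 hxs
    have : ¬ ∀ y ∈ I, x ≤ y := by
      intro h
      have := le_csInf hne h
      rw [hInf] at this
      linarith
    push_neg at this
    obtain ⟨y, hyI, hyx⟩ := this
    exact hconn.out hyI hs ⟨hyx.le, hxs⟩
  have haI : ∀ n, a n ∈ I := fun n => hsubI _ (ha n).1 (ha n).2.le
  by_cases hsmall : ∀ n, a n < ε
  · obtain ⟨hS, hB⟩ := hH a (fun n => ⟨(ha n).1, hsmall n⟩) hsum
    exact ⟨hS, hB.trans (mul_le_mul_of_nonneg_right (le_max_left _ _) hTnonneg)⟩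
  · push_neg at hsmall
    obtain ⟨k, hk⟩ := hsmall
    set b : ℕ → ℝ := fun n => Nat.rec s (fun m _ => a m) n with hbdef
    have hbI : ∀ n, b n ∈ I := by
      intro n
      cases n with
      | zero => exact hs
      | succ m => exact haI m
    have hbsum : Summable b :=
      (summable_nat_add_iff 1).mp (show Summable (fun n => b (n+1)) from hsum)
    obtain ⟨hSb, hBb⟩ := hc b hbI hbsum
    set Qb : ℕ → ℝ := fun m => qam f I (m+1) (fun k : Fin (m+1) => b (k:ℕ)) with hQbdef
    set Qa : ℕ → ℝ := fun m => qam f I (m+1) (fun k : Fin (m+1) => a (k:ℕ)) with hQadef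
    have hbdd : ∀ n, b n ≤ s := by
      intro n
      cases n with
      | zero => exact le_refl s
      | succ m => exact (ha m).2.le
    have hsup : (⨆ n, b n) = s := by
      refine le_antisymm (ciSup_le hbdd) ?_
      exact le_ciSup ⟨s, by rintro x ⟨n, rfl⟩; exact hbdd n⟩ 0
    have hcomp : ∀ n, Qa n ≤ Qb (n+1) := by
      intro n
      have h := qam_le_qam_cons I hconn f hf hmono hs
        (fun k : Fin (n+1) => a (k:ℕ)) (fun i => haI i) (fun i => (ha i).2.le)
      have heq : (fun k : Fin (n+1+1) => b (k:ℕ)) =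
          Fin.cons s (fun k : Fin (n+1) => a (k:ℕ)) := by
        funext i
        refine Fin.cases ?_ ?_ i
        · rfl
        · intro j; simp [Fin.val_succ]; rfl
      show qam f I (n+1) _ ≤ qam f I (n+1+1) (fun k : Fin (n+1+1) => b (k:ℕ))
      rw [heq]
      exact h
    have hQb_nonneg : ∀ m, 0 ≤ Qb m :=
      fun m => (hIpos (qam_mem I hconn f hf _ (fun i => hbI i))).le
    have hQa_nonneg : ∀ m, 0 ≤ Qa m :=
      fun m => (hIpos (qam_mem I hconn f hf _ (fun i => haI i))).le
    have hSb' : Summable (fun n => Qb (n+1)) :=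
      hSb.comp_injective (add_left_injective 1)
    have hSa : Summable Qa := Summable.of_nonneg_of_le hQa_nonneg hcomp hSb'
    refine ⟨hSa, ?_⟩
    have h1 : ∑' n, Qa n ≤ ∑' n, Qb (n+1) := Summable.tsum_le_tsum hcomp hSa hSb'
    have h2 : ∑' n, Qb (n+1) ≤ ∑' n, Qb n := by
      rw [Summable.tsum_eq_zero_add hSb]
      linarith [hQb_nonneg 0]
    have h3 : ∑' n, b n = s + ∑' n, a n := by
      rw [Summable.tsum_eq_zero_add hbsum]; rfl
    have hεpos : (0:ℝ) < ε := hIpos hε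
    have hεT : ε ≤ ∑' n, a n :=
      hk.trans (Summable.le_tsum hsum k (fun m _ => (ha m).1.le))
    have hspos : (0:ℝ) < s := hIpos hs
    have hcs : (0:ℝ) < c s := hcpos s hs
    calc ∑' n, Qa n
        ≤ ∑' n, Qb n := h1.trans h2
      _ ≤ c (⨆ n, b n) * ∑' n, b n := hBb
      _ = c s * (s + ∑' n, a n) := by rw [hsup, h3]
      _ ≤ (1 + s / ε) * c s * ∑' n, a n := by
          have key : s + ∑' n, a n ≤ (1 + s / ε) * ∑' n, a n := by
            have h4 : s = (s / ε) * ε := by field_simp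
            nlinarith [mul_le_mul_of_nonneg_left hεT (le_of_lt (div_pos hspos hεpos))]
          nlinarith
      _ ≤ max Hε ((1 + s / ε) * c s) * ∑' n, a n :=
          mul_le_mul_of_nonneg_right (le_max_right _ _) hTnonneg
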